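/- arXiv:2605.24364 — 2 statements merged into one kernel-verified Lean document; each statement's English description precedes it below -/
import Mathlib

section
/- Suppose Δ_b - Δ_{b+1} ≥ (κ²/(4c_L))‖g_b‖_*² and Δ_b ≤ R‖g_b‖_* for all b, with Δ_b ≥ 0, κ ∈ (0,1], c_L, R > 0. Then Δ_B ≤ 4c_L R²/(κ² B) for all B ≥ 1. -/
/-- Auxiliary recursion step: if `a u² ≤ D (u - v)` and `a N u ≤ D` with all
quantities suitably signed and `1 ≤ N`, then `a (N+1) v ≤ D`. -/
lemma mcboost_step_aux (D a u v N : ℝ) (hD : 0 < D) (ha : 0 < a)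
    (hu : 0 ≤ u) (hv : 0 ≤ v) (hN : 1 ≤ N)
    (kn : a * u ^ 2 ≤ D * (u - v)) (ih : a * N * u ≤ D) :
    a * (N + 1) * v ≤ D := by
  by_cases hcase : a * (N + 1) * u ≤ D
  · have huv : v ≤ u := by nlinarith [mul_nonneg ha.le (sq_nonneg u)]
    have hpos : (0:ℝ) ≤ a * (N + 1) := by positivity
    calc a * (N + 1) * v ≤ a * (N + 1) * u := mul_le_mul_of_nonneg_left huv hpos
      _ ≤ D := hcase
  · push_neg at hcase
    have hq : (0:ℝ) ≤ (N + 1) * D - N * (a * (N + 1) * u) := by nlinarith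
    have hmul := mul_le_mul_of_nonneg_left kn
      (by positivity : (0:ℝ) ≤ a * (N + 1) ^ 2)
    -- hmul : a(N+1)² · a u² ≤ a(N+1)² · D(u-v)
    have hkey : (N + 1) * D * (a * (N + 1) * v) ≤
        (N + 1) * D * (a * (N + 1) * u) - (a * (N + 1) * u) ^ 2 := by nlinarith [hmul]
    have hT : (N + 1) * D * (a * (N + 1) * u) - (a * (N + 1) * u) ^ 2 ≤ (N + 1) * D ^ 2 := by
      have hEq : N ^ 2 * ((N + 1) * D ^ 2 -
          ((N + 1) * D * (a * (N + 1) * u) - (a * (N + 1) * u) ^ 2)) =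
          N * D ^ 2 + N * (N - 1) * (D * ((N + 1) * D - N * (a * (N + 1) * u)))
          + N ^ 2 * (a * (N + 1) * u - D) ^ 2 := by ring
      have t1 : (0:ℝ) ≤ N * D ^ 2 := by positivity
      have t2 : (0:ℝ) ≤ N * (N - 1) * (D * ((N + 1) * D - N * (a * (N + 1) * u))) :=
        mul_nonneg (mul_nonneg (by linarith) (by linarith)) (mul_nonneg hD.le hq)
      have t3 : (0:ℝ) ≤ N ^ 2 * (a * (N + 1) * u - D) ^ 2 := by positivity
      have hN2 : (0:ℝ) < N ^ 2 := by nlinarith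
      nlinarith [hEq, t1, t2, t3, hN2]
    have hfin : (N + 1) * D * (a * (N + 1) * v) ≤ (N + 1) * D * D := by nlinarith [hkey, hT]
    have hpos : (0:ℝ) < (N + 1) * D := mul_pos (by linarith) hD
    exact le_of_mul_le_mul_left (by linarith) hpos

/-- Sublinear `O(1/B)` rate of MCBoost under smoothness: if
`Δ_b - Δ_{b+1} ≥ (κ²/(4c_L))‖g_b‖_*²` and `Δ_b ≤ R‖g_b‖_*`, with `Δ_b ≥ 0`,
`κ ∈ (0,1]`, `c_L, R > 0`, then `Δ_B ≤ 4c_L R²/(κ² B)` for all `B ≥ 1`. -/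
theorem mcboost_sublinear_rate
    (Δ gs : ℕ → ℝ) (κ cL R : ℝ)
    (hκ : κ ∈ Set.Ioc (0 : ℝ) 1) (hcL : 0 < cL) (hR : 0 < R)
    (hnn : ∀ b, 0 ≤ Δ b)
    (hdesc : ∀ b, Δ b - Δ (b + 1) ≥ κ ^ 2 / (4 * cL) * (gs b) ^ 2)
    (hbd : ∀ b, Δ b ≤ R * gs b) :
    ∀ B : ℕ, 1 ≤ B → Δ B ≤ 4 * cL * R ^ 2 / (κ ^ 2 * B) := by
  obtain ⟨hκ0, hκ1⟩ := hκ
  have hDpos : (0:ℝ) < 4 * cL * R ^ 2 := by positivity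
  have hκ2 : (0:ℝ) < κ ^ 2 := by positivity
  have key : ∀ b, κ ^ 2 * (Δ b) ^ 2 ≤ 4 * cL * R ^ 2 * (Δ b - Δ (b + 1)) := by
    intro b
    have h1 := hdesc b
    have h2 := hbd b
    have h3 := hnn b
    have hg : 0 ≤ gs b := by nlinarith
    have hsq : (Δ b) ^ 2 ≤ R ^ 2 * (gs b) ^ 2 := by nlinarith
    have h1' : κ ^ 2 * (gs b) ^ 2 ≤ 4 * cL * (Δ b - Δ (b + 1)) := by
      rw [div_mul_eq_mul_div, ge_iff_le, div_le_iff₀ (by positivity : (0:ℝ) < 4 * cL)] at h1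
      linarith
    have hA : κ ^ 2 * (Δ b) ^ 2 ≤ κ ^ 2 * (R ^ 2 * (gs b) ^ 2) :=
      mul_le_mul_of_nonneg_left hsq hκ2.le
    have hB : R ^ 2 * (κ ^ 2 * (gs b) ^ 2) ≤ R ^ 2 * (4 * cL * (Δ b - Δ (b + 1))) :=
      mul_le_mul_of_nonneg_left h1' (sq_nonneg R)
    nlinarith [hA, hB]
  have main : ∀ B : ℕ, 1 ≤ B → κ ^ 2 * B * Δ B ≤ 4 * cL * R ^ 2 := by
    intro B hB
    induction B with
    | zero => omega
    | succ n ih =>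
      rcases Nat.eq_or_lt_of_le hB with h1 | h1
      · have hn : n = 0 := by omega
        subst hn
        have k0 := key 0
        have h0 := hnn 0
        have h1' := hnn 1
        push_cast
        nlinarith [sq_nonneg (2 * κ ^ 2 * Δ 0 - 4 * cL * R ^ 2), sq_nonneg (κ * Δ 1)]
      · have hn1 : 1 ≤ n := by omega
        have ih' := ih hn1
        have kn := key n
        have hnr : (1:ℝ) ≤ (n:ℝ) := by exact_mod_cast hn1
        push_cast
        push_cast at ih'
        have := mcboost_step_aux (4 * cL * R ^ 2) (κ ^ 2) (Δ n) (Δ (n + 1)) (n:ℝ)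
          hDpos hκ2 (hnn n) (hnn (n + 1)) hnr (by linarith [kn]) ih'
        linarith
  intro B hB
  have h := main B hB
  have hBpos : (0:ℝ) < (B:ℝ) := by exact_mod_cast hB
  rw [le_div_iff₀ (by positivity)]
  linarith
end

section
/- Under the covariate-shift setup, suppose E_T[s(Y, f̃(X))] = E_S[w(X)·s(Y, f̃(X))] where w is the density ratio, and the score decomposes as s = s₁ + s₂ with ‖E_S[s₁|X]‖_{L²} ≤ C̃, ‖E_S[s₂|X]‖_{L²} ≤ C̃, and f̃ is multicalibrated on source: |E_S[h(X)s(Y,f̃(X))]| < α for all h ∈ H_aud. Then for any h ∈ H_aud, any C > 0, and any weight function w̃: |E_T[s(Y,f̃(X))]| ≤ C̃(‖w - h/C‖_{L²} + ‖h/C - w̃‖_{L²}) + |E_S[(w̃ - w)s₂(Y)]| + α/C. -/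
open MeasureTheory

/-- The `L²(μ)` norm of a real function, `(∫ f²)^{1/2}`. -/
noncomputable def l2norm {X : Type*} [MeasurableSpace X]
    (μ : Measure X) (f : X → ℝ) : ℝ :=
  Real.sqrt (∫ x, (f x) ^ 2 ∂μ)

lemma mul_integrable' {X : Type*} [MeasurableSpace X] {μ : Measure X}
    {f g : X → ℝ} (hf : MemLp f 2 μ) (hg : MemLp g 2 μ) :
    Integrable (fun x => f x * g x) μ := by
  have h := L2.integrable_inner (𝕜 := ℝ) (hf.toLp f) (hg.toLp g)
  refine h.congr ?_
  filter_upwards [hf.coeFn_toLp, hg.coeFn_toLp] with x hx hy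
  simp [hx, hy, RCLike.inner_apply, mul_comm]

lemma l2norm_eq_norm_toLp {X : Type*} [MeasurableSpace X] {μ : Measure X}
    {f : X → ℝ} (hf : MemLp f 2 μ) : l2norm μ f = ‖hf.toLp f‖ := by
  have h1 : inner (𝕜 := ℝ) (hf.toLp f) (hf.toLp f) = ∫ x, f x ^ 2 ∂μ := by
    rw [L2.inner_def]
    refine integral_congr_ae ?_
    filter_upwards [hf.coeFn_toLp] with x hx
    simp [hx, RCLike.inner_apply, sq]
  rw [l2norm, ← h1, real_inner_self_eq_norm_sq, Real.sqrt_sq (norm_nonneg _)]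

lemma cauchy_schwarz_integral {X : Type*} [MeasurableSpace X] {μ : Measure X}
    {f g : X → ℝ} (hf : MemLp f 2 μ) (hg : MemLp g 2 μ) :
    |∫ x, f x * g x ∂μ| ≤ l2norm μ f * l2norm μ g := by
  have h1 : inner (𝕜 := ℝ) (hf.toLp f) (hg.toLp g) = ∫ x, f x * g x ∂μ := by
    rw [L2.inner_def]
    refine integral_congr_ae ?_
    filter_upwards [hf.coeFn_toLp, hg.coeFn_toLp] with x hx hy
    simp [hx, hy, RCLike.inner_apply, mul_comm]
  rw [← h1, l2norm_eq_norm_toLp hf, l2norm_eq_norm_toLp hg]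
  exact abs_real_inner_le_norm _ _

lemma l2norm_nonneg' {X : Type*} [MeasurableSpace X] (μ : Measure X) (f : X → ℝ) :
    0 ≤ l2norm μ f := Real.sqrt_nonneg _


/-- Target-independent learning under covariate shift: if the target mean score equals
`E_S[w·(g₁+g₂)]` (with `w` the density ratio and `g₁, g₂` the conditional means of the
score components, each with `L²` norm at most `C̃`), and `f̃` is `(H_aud, α)`-multicalibrated
on the source, then for every `h ∈ H_aud`, every `C > 0`, and every candidate weight `w̃`:
`|E_T[s]| ≤ C̃(‖w - h/C‖ + ‖h/C - w̃‖) + |E_S[(w̃-w)g₂]| + α/C`. -/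
theorem covariate_shift_universal_adaptability
    {X : Type*} [MeasurableSpace X] (μ : Measure X) [IsProbabilityMeasure μ]
    (Haud : Set (X → ℝ)) (w wt g1 g2 : X → ℝ) (Ct α : ℝ)
    (hCt : 0 ≤ Ct) (hα : 0 < α)
    (hw : MemLp w 2 μ) (hwt : MemLp wt 2 μ)
    (hg1 : MemLp g1 2 μ) (hg2 : MemLp g2 2 μ)
    (hH : ∀ h ∈ Haud, MemLp h 2 μ)
    (hg1bd : l2norm μ g1 ≤ Ct) (hg2bd : l2norm μ g2 ≤ Ct)
    (hmc : ∀ h ∈ Haud, |∫ x, h x * (g1 x + g2 x) ∂μ| < α) :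
    ∀ h ∈ Haud, ∀ C : ℝ, 0 < C →
      |∫ x, w x * (g1 x + g2 x) ∂μ| ≤
        Ct * (l2norm μ (fun x => w x - h x / C) + l2norm μ (fun x => h x / C - wt x)) +
          |∫ x, (wt x - w x) * g2 x ∂μ| + α / C := by
  intro h hh C hC
  have hhm := hH h hh
  have hhC : MemLp (fun x => h x / C) 2 μ := by
    simpa [div_eq_inv_mul] using hhm.const_mul C⁻¹
  have hA : MemLp (fun x => w x - h x / C) 2 μ := hw.sub hhC
  have hB : MemLp (fun x => wt x - h x / C) 2 μ := hwt.sub hhC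
  have hB' : MemLp (fun x => h x / C - wt x) 2 μ := hhC.sub hwt
  have hWW : MemLp (fun x => w x - wt x) 2 μ := hw.sub hwt
  have hg12 : MemLp (fun x => g1 x + g2 x) 2 μ := hg1.add hg2
  have i1 : Integrable (fun x => (w x - h x / C) * g1 x) μ := mul_integrable' hA hg1
  have i2 : Integrable (fun x => (wt x - h x / C) * g2 x) μ := mul_integrable' hB hg2
  have i3 : Integrable (fun x => (w x - wt x) * g2 x) μ := mul_integrable' hWW hg2
  have i4 : Integrable (fun x => C⁻¹ * (h x * (g1 x + g2 x))) μ :=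
    (mul_integrable' hhm hg12).const_mul _
  have hsum : (fun x => w x * (g1 x + g2 x)) =
      fun x => (w x - h x / C) * g1 x + ((wt x - h x / C) * g2 x +
        ((w x - wt x) * g2 x + C⁻¹ * (h x * (g1 x + g2 x)))) := by
    funext x
    field_simp
    ring
  have hkey : ∫ x, w x * (g1 x + g2 x) ∂μ =
      (∫ x, (w x - h x / C) * g1 x ∂μ) + ((∫ x, (wt x - h x / C) * g2 x ∂μ) +
        ((∫ x, (w x - wt x) * g2 x ∂μ) + ∫ x, C⁻¹ * (h x * (g1 x + g2 x)) ∂μ)) := by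
    have i34 : Integrable (fun x => (w x - wt x) * g2 x + C⁻¹ * (h x * (g1 x + g2 x))) μ :=
      i3.add i4
    have i234 : Integrable (fun x => (wt x - h x / C) * g2 x +
        ((w x - wt x) * g2 x + C⁻¹ * (h x * (g1 x + g2 x)))) μ := i2.add i34
    rw [hsum, integral_add i1 i234, integral_add i2 i34, integral_add i3 i4]
  -- bound each term
  have b1 : |∫ x, (w x - h x / C) * g1 x ∂μ| ≤ Ct * l2norm μ (fun x => w x - h x / C) := by
    calc |∫ x, (w x - h x / C) * g1 x ∂μ|
        ≤ l2norm μ (fun x => w x - h x / C) * l2norm μ g1 := cauchy_schwarz_integral hA hg1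
      _ ≤ l2norm μ (fun x => w x - h x / C) * Ct :=
          mul_le_mul_of_nonneg_left hg1bd (l2norm_nonneg' _ _)
      _ = Ct * l2norm μ (fun x => w x - h x / C) := mul_comm _ _
  have b2 : |∫ x, (wt x - h x / C) * g2 x ∂μ| ≤ Ct * l2norm μ (fun x => h x / C - wt x) := by
    have hneg : ∫ x, (wt x - h x / C) * g2 x ∂μ = -∫ x, (h x / C - wt x) * g2 x ∂μ := by
      rw [← integral_neg]
      exact integral_congr_ae (Filter.Eventually.of_forall fun x => by ring)
    rw [hneg, abs_neg]
    calc |∫ x, (h x / C - wt x) * g2 x ∂μ|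
        ≤ l2norm μ (fun x => h x / C - wt x) * l2norm μ g2 := cauchy_schwarz_integral hB' hg2
      _ ≤ l2norm μ (fun x => h x / C - wt x) * Ct :=
          mul_le_mul_of_nonneg_left hg2bd (l2norm_nonneg' _ _)
      _ = Ct * l2norm μ (fun x => h x / C - wt x) := mul_comm _ _
  have b3 : |∫ x, (w x - wt x) * g2 x ∂μ| = |∫ x, (wt x - w x) * g2 x ∂μ| := by
    have hneg : ∫ x, (w x - wt x) * g2 x ∂μ = -∫ x, (wt x - w x) * g2 x ∂μ := by
      rw [← integral_neg]
      exact integral_congr_ae (Filter.Eventually.of_forall fun x => by ring)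
    rw [hneg, abs_neg]
  have b4 : |∫ x, C⁻¹ * (h x * (g1 x + g2 x)) ∂μ| ≤ α / C := by
    rw [integral_const_mul, abs_mul, abs_of_nonneg (inv_nonneg.mpr hC.le)]
    rw [div_eq_inv_mul]
    exact mul_le_mul_of_nonneg_left (hmc h hh).le (inv_nonneg.mpr hC.le)
  calc |∫ x, w x * (g1 x + g2 x) ∂μ|
      ≤ |∫ x, (w x - h x / C) * g1 x ∂μ| + (|∫ x, (wt x - h x / C) * g2 x ∂μ| +
        (|∫ x, (w x - wt x) * g2 x ∂μ| + |∫ x, C⁻¹ * (h x * (g1 x + g2 x)) ∂μ|)) := by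
        rw [hkey]
        exact (abs_add_le _ _).trans (by gcongr <;> exact (abs_add_le _ _).trans (by gcongr; exact abs_add_le _ _))
    _ ≤ Ct * l2norm μ (fun x => w x - h x / C) + (Ct * l2norm μ (fun x => h x / C - wt x) +
        (|∫ x, (wt x - w x) * g2 x ∂μ| + α / C)) := by
        rw [b3] at *
        gcongr
    _ = Ct * (l2norm μ (fun x => w x - h x / C) + l2norm μ (fun x => h x / C - wt x)) +
          |∫ x, (wt x - w x) * g2 x ∂μ| + α / C := by ring
end
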